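/- Fix n ≥ 1 and Q = (q_1,…,q_n) ∈ ℤⁿ with all q_i ≥ 0. For every 1 ≤ k ≤ n: (a) V_k^Q = (φ_k^Q)^{−1}(W_k), where W_k := {Y ∈ ℤⁿ : y_i = 0 for 1 ≤ i ≤ n−k, and 0 ≤ y_{n−k+j} ≤ q_j for 1 ≤ j ≤ k}; (b) V_{k−1}^Q = (e_k − a_k^Q) − V_{k−1}^Q as sets, where A − V := {A − v : v ∈ V}; (c) V_k^Q is connected and equals the connected component containing 0 of the set {X ∈ ℤⁿ : 0 ≤lex φ_k^Q(X) ≤lex (0,…,0,q_1,…,q_k)} (the last vector having n−k leading zeros). -/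

import Mathlib

/-- A single step of a path inside `A`: both endpoints are in `A` and they are
comparable. -/
def StepIn {V : Type*} [Preorder V] (A : Set V) (a b : V) : Prop :=
  a ∈ A ∧ b ∈ A ∧ (a ≤ b ∨ b ≤ a)

/-- `x` and `y` are joined by a path inside `A` whose consecutive points are comparable. -/
def ReachIn {V : Type*} [Preorder V] (A : Set V) : V → V → Prop :=
  Relation.ReflTransGen (StepIn A)

/-- `A` is connected (in the comparability graph). -/
def IsConnSet {V : Type*} [Preorder V] (A : Set V) : Prop :=
  ∀ x ∈ A, ∀ y ∈ A, ReachIn A x y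

/-- The connected component of `x₀` in `A`. -/
def connComp {V : Type*} [Preorder V] (A : Set V) (x₀ : V) : Set V :=
  {x | x ∈ A ∧ ReachIn A x₀ x}

/-- Lexicographic order on `ℤⁿ`. -/
def lexLe {n : ℕ} (x y : Fin n → ℤ) : Prop :=
  x = y ∨ ∃ i : Fin n, (∀ j : Fin n, j < i → x j = y j) ∧ x i < y i

/-- Standard basis vectors `e_k` of `ℤⁿ` (1-indexed). -/
def stdE (n : ℕ) (k : ℤ) : Fin n → ℤ := fun i =>
  if ((i : ℕ) : ℤ) + 1 = k then 1 else 0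

/-- `q_i` (1-indexed entry of `Q`), with `qval = 0` for indices out of range. -/
def qval (n : ℕ) (Q : Fin n → ℤ) (i : ℕ) : ℤ :=
  if h : 1 ≤ i ∧ i - 1 < n then Q ⟨i - 1, h.2⟩ else 0

/-- The unimodular automorphism
`φ_k^Q(X) = (x_{k+1},…,x_n, x_1 + q_1(x_2+⋯+x_k), …, x_{k−1} + q_{k−1}x_k, x_k)`
(written for 0-indexed coordinates). -/
def phiQ (n k : ℕ) (Q X : Fin n → ℤ) : Fin n → ℤ := fun j =>
  if h : (j : ℕ) + k < n then X ⟨(j : ℕ) + k, h⟩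
  else (∑ i : Fin n, if (i : ℕ) = (j : ℕ) + k - n then X i else 0) +
    qval n Q ((j : ℕ) + k - n + 1) *
      (∑ i : Fin n, if (j : ℕ) + k - n < (i : ℕ) ∧ (i : ℕ) < k then X i else 0)

/-- Auxiliary recursion: `aQaux k = (a_k, Σ_{i=1}^k q_i·a_i)`. -/
def aQaux (n : ℕ) (Q : Fin n → ℤ) : ℕ → (Fin n → ℤ) × (Fin n → ℤ)
  | 0 => (0, 0)
  | (k + 1) =>
    let s := (aQaux n Q k).2
    let a := stdE n ((k : ℤ) + 1) - s
    (a, s + qval n Q (k + 1) • a)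

/-- `a_k^Q = e_k − Σ_{i=1}^{k−1} q_i·a_i^Q`, with `a_0^Q = 0`. -/
def aQ (n : ℕ) (Q : Fin n → ℤ) (k : ℕ) : Fin n → ℤ := (aQaux n Q k).1

/-- `V_0^Q = {0}` and `V_k^Q = {j·a_k^Q + v : 0 ≤ j ≤ q_k, v ∈ V_{k−1}^Q}`. -/
def VQ (n : ℕ) (Q : Fin n → ℤ) : ℕ → Set (Fin n → ℤ)
  | 0 => {0}
  | (k + 1) => {X | ∃ j : ℤ, 0 ≤ j ∧ j ≤ qval n Q (k + 1) ∧
      ∃ v ∈ VQ n Q k, X = j • aQ n Q (k + 1) + v}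

-- basic graph lemmas
theorem stepIn_symm {V : Type*} [Preorder V] {A : Set V} {a b : V}
    (h : StepIn A a b) : StepIn A b a := ⟨h.2.1, h.1, h.2.2.symm⟩

theorem reachIn_symm {V : Type*} [Preorder V] {A : Set V} {a b : V}
    (h : ReachIn A a b) : ReachIn A b a := by
  induction h with
  | refl => exact Relation.ReflTransGen.refl
  | tail _ hstep ih => exact Relation.ReflTransGen.head (stepIn_symm hstep) ih

theorem reachIn_mono {V : Type*} [Preorder V] {A B : Set V} (hAB : A ⊆ B) {a b : V}
    (h : ReachIn A a b) : ReachIn B a b := by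
  induction h with
  | refl => exact Relation.ReflTransGen.refl
  | tail _ hstep ih => exact ih.tail ⟨hAB hstep.1, hAB hstep.2.1, hstep.2.2⟩

theorem reachIn_translate {n : ℕ} {A : Set (Fin n → ℤ)} {a b : Fin n → ℤ} (c : Fin n → ℤ)
    (h : ReachIn A a b) : ReachIn ((c + ·) '' A) (c + a) (c + b) := by
  induction h with
  | refl => exact Relation.ReflTransGen.refl
  | tail _ hstep ih =>
      refine ih.tail ⟨⟨_, hstep.1, rfl⟩, ⟨_, hstep.2.1, rfl⟩, ?_⟩
      rcases hstep.2.2 with h' | h'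
      · exact Or.inl (fun i => by simpa using add_le_add_left (h' i) (c i))
      · exact Or.inr (fun i => by simpa using add_le_add_left (h' i) (c i))

theorem qval_nonneg {n : ℕ} {Q : Fin n → ℤ} (hQ : ∀ i, 0 ≤ Q i) (i : ℕ) :
    0 ≤ qval n Q i := by
  unfold qval; split <;> simp [hQ]

-- pointwise ≤ implies lex ≤
theorem lexLe_of_le {n : ℕ} {x y : Fin n → ℤ} (h : ∀ i, x i ≤ y i) : lexLe x y := by
  by_cases hxy : x = y
  · exact Or.inl hxy
  · right
    have hne : ∃ m : ℕ, ∃ hm : m < n, x ⟨m, hm⟩ ≠ y ⟨m, hm⟩ := by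
      by_contra hc
      push_neg at hc
      exact hxy (funext fun i => hc i i.isLt)
    classical
    have hspec := Nat.find_spec (p := fun m => ∃ hm : m < n, x ⟨m, hm⟩ ≠ y ⟨m, hm⟩) hne
    obtain ⟨hm, hmne⟩ := hspec
    set m := Nat.find (p := fun m => ∃ hm : m < n, x ⟨m, hm⟩ ≠ y ⟨m, hm⟩) hne with hmdef
    refine ⟨⟨m, hm⟩, fun j hj => ?_, lt_of_le_of_ne (h _) hmne⟩
    by_contra hj'
    exact Nat.find_min (p := fun m => ∃ hm : m < n, x ⟨m, hm⟩ ≠ y ⟨m, hm⟩) hne hj ⟨j.isLt, by simpa using hj'⟩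
theorem sum_ite_add {n : ℕ} (P : Fin n → Prop) [DecidablePred P] (f g : Fin n → ℤ) :
    (∑ i : Fin n, if P i then f i + g i else 0)
      = (∑ i : Fin n, if P i then f i else 0) + ∑ i : Fin n, if P i then g i else 0 := by
  rw [← Finset.sum_add_distrib]
  exact Finset.sum_congr rfl fun i _ => by split <;> simp

theorem sum_ite_mul {n : ℕ} (P : Fin n → Prop) [DecidablePred P] (c : ℤ) (f : Fin n → ℤ) :
    (∑ i : Fin n, if P i then c * f i else 0) = c * ∑ i : Fin n, if P i then f i else 0 := by
  rw [Finset.mul_sum]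
  exact Finset.sum_congr rfl fun i _ => by split <;> simp

theorem phiQ_add (n k : ℕ) (Q X Y : Fin n → ℤ) :
    phiQ n k Q (X + Y) = phiQ n k Q X + phiQ n k Q Y := by
  funext j
  simp only [phiQ, Pi.add_apply]
  split
  · rfl
  · rw [sum_ite_add, sum_ite_add]
    ring

theorem phiQ_smul (n k : ℕ) (Q : Fin n → ℤ) (c : ℤ) (X : Fin n → ℤ) :
    phiQ n k Q (c • X) = c • phiQ n k Q X := by
  funext j
  simp only [phiQ, Pi.smul_apply, smul_eq_mul]
  split
  · rfl
  · rw [sum_ite_mul, sum_ite_mul]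
    ring

/-- `phiQ` as a linear map. -/
def phiL (n k : ℕ) (Q : Fin n → ℤ) : (Fin n → ℤ) →ₗ[ℤ] (Fin n → ℤ) where
  toFun := phiQ n k Q
  map_add' := phiQ_add n k Q
  map_smul' := phiQ_smul n k Q

theorem phiL_apply (n k : ℕ) (Q X : Fin n → ℤ) : phiL n k Q X = phiQ n k Q X := rfl
/-- Partial sum `Σ_{m ≤ i < k} d i`. -/
def Tsum (n k : ℕ) (d : Fin n → ℤ) (m : ℕ) : ℤ :=
  ∑ i : Fin n, if m ≤ (i : ℕ) ∧ (i : ℕ) < k then d i else 0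

theorem phiQ_lo {n k : ℕ} (Q X : Fin n → ℤ) (j : Fin n) (h : (j : ℕ) + k < n) :
    phiQ n k Q X j = X ⟨(j : ℕ) + k, h⟩ := by
  simp [phiQ, h]

theorem phiQ_hi {n k : ℕ} (Q X : Fin n → ℤ) (j : Fin n) (h : n ≤ (j : ℕ) + k)
    (hm : (j : ℕ) + k - n < n) :
    phiQ n k Q X j = X ⟨(j : ℕ) + k - n, hm⟩ +
      qval n Q ((j : ℕ) + k - n + 1) * Tsum n k X ((j : ℕ) + k - n + 1) := by
  rw [phiQ, dif_neg (by omega)]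
  have h1 : (∑ i : Fin n, if (i:ℕ) = (j:ℕ) + k - n then X i else 0) = X ⟨(j:ℕ) + k - n, hm⟩ := by
    rw [Finset.sum_eq_single ⟨(j:ℕ) + k - n, hm⟩]
    · simp
    · exact fun b _ hb => if_neg fun hb' => hb (Fin.ext hb')
    · simp
  have h2 : (∑ i : Fin n, if (j:ℕ) + k - n < (i:ℕ) ∧ (i:ℕ) < k then X i else 0)
      = Tsum n k X ((j:ℕ) + k - n + 1) := by
    unfold Tsum
    refine Finset.sum_congr rfl fun i _ => ?_
    have hiff : ((j:ℕ)+k-n < (i:ℕ) ∧ (i:ℕ) < k) ↔ ((j:ℕ)+k-n+1 ≤ (i:ℕ) ∧ (i:ℕ) < k) := by omega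
    simp only [hiff]
  rw [h1, h2]

theorem Tsum_nonneg {n k : ℕ} {d : Fin n → ℤ} (hd : ∀ i, 0 ≤ d i) (m : ℕ) :
    0 ≤ Tsum n k d m :=
  Finset.sum_nonneg fun i _ => by split <;> simp [hd]

theorem Tsum_anti {n k : ℕ} {d : Fin n → ℤ} (hd : ∀ i, 0 ≤ d i) {m m' : ℕ} (h : m ≤ m') :
    Tsum n k d m' ≤ Tsum n k d m := by
  refine Finset.sum_le_sum fun i _ => ?_
  split
  · rw [if_pos (⟨by omega, by omega⟩ : m ≤ (i:ℕ) ∧ (i:ℕ) < k)]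
  · split <;> simp [hd]

theorem Tsum_succ {n k : ℕ} (d : Fin n → ℤ) {m : ℕ} (hm : m < k) (hmn : m < n) :
    Tsum n k d m = d ⟨m, hmn⟩ + Tsum n k d (m + 1) := by
  unfold Tsum
  have : ∀ i : Fin n, (if m ≤ (i:ℕ) ∧ (i:ℕ) < k then d i else 0)
      = (if (i:ℕ) = m then d i else 0) + (if m + 1 ≤ (i:ℕ) ∧ (i:ℕ) < k then d i else 0) := by
    intro i
    by_cases h1 : (i:ℕ) = m
    · rw [if_pos h1, if_pos (by omega), if_neg (by omega), add_zero]
    · rw [if_neg h1, zero_add]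
      congr 1
      simp only [eq_iff_iff]
      omega
  rw [Finset.sum_congr rfl fun i _ => this i, Finset.sum_add_distrib]
  congr 1
  rw [Finset.sum_eq_single ⟨m, hmn⟩]
  · simp
  · intro b _ hb
    exact if_neg fun hb' => hb (Fin.ext hb')
  · simp

theorem Tsum_top {n k : ℕ} (d : Fin n → ℤ) {m : ℕ} (hm : k ≤ m) : Tsum n k d m = 0 := by
  unfold Tsum
  refine Finset.sum_eq_zero fun i _ => if_neg (by omega)
/-- `Sq s = Σ_{i=1}^s q_i a_i`. -/
def Sq (n : ℕ) (Q : Fin n → ℤ) (s : ℕ) : Fin n → ℤ := (aQaux n Q s).2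

theorem Sq_zero (n : ℕ) (Q : Fin n → ℤ) : Sq n Q 0 = 0 := rfl

theorem aQ_succ (n : ℕ) (Q : Fin n → ℤ) (s : ℕ) :
    aQ n Q (s + 1) = stdE n ((s : ℤ) + 1) - Sq n Q s := rfl

theorem Sq_succ (n : ℕ) (Q : Fin n → ℤ) (s : ℕ) :
    Sq n Q (s + 1) = Sq n Q s + qval n Q (s + 1) • aQ n Q (s + 1) := rfl

theorem stdE_eval {n : ℕ} (s : ℕ) (i : Fin n) :
    stdE n (s : ℤ) i = if (i : ℕ) + 1 = s then 1 else 0 := by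
  unfold stdE
  congr 1
  simp only [eq_iff_iff]
  omega

theorem Tsum_stdE {n k : ℕ} {s : ℕ} (hs1 : 1 ≤ s) (hsk : s ≤ k) (hkn : k ≤ n) (m : ℕ) :
    Tsum n k (stdE n (s : ℤ)) m = if m < s then 1 else 0 := by
  unfold Tsum
  rw [Finset.sum_eq_single ⟨s - 1, by omega⟩]
  · rw [stdE_eval]
    simp only [Fin.val_mk]
    rcases Nat.lt_or_ge m s with h | h
    · rw [if_pos ⟨by omega, by omega⟩, if_pos (by omega), if_pos h]
    · rw [if_neg (by omega), if_neg (by omega)]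
  · intro b _ hb
    have hb' : (b : ℕ) ≠ s - 1 := fun h => hb (Fin.ext h)
    have hz : stdE n (s : ℤ) b = 0 := by rw [stdE_eval, if_neg (by omega)]
    rw [hz, ite_self]
  · simp
theorem phiQ_sub (n k : ℕ) (Q X Y : Fin n → ℤ) :
    phiQ n k Q (X - Y) = phiQ n k Q X - phiQ n k Q Y := map_sub (phiL n k Q) X Y

theorem phiQ_zero (n k : ℕ) (Q : Fin n → ℤ) : phiQ n k Q 0 = 0 := map_zero (phiL n k Q)

theorem phiQ_stdE {n k : ℕ} (Q : Fin n → ℤ) {s : ℕ} (hs1 : 1 ≤ s) (hsk : s ≤ k) (hkn : k ≤ n)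
    (j : Fin n) :
    phiQ n k Q (stdE n (s : ℤ)) j =
      if n ≤ (j : ℕ) + k ∧ (j : ℕ) + k - n + 1 = s then 1
      else if n ≤ (j : ℕ) + k ∧ (j : ℕ) + k - n + 1 < s then qval n Q ((j : ℕ) + k - n + 1)
      else 0 := by
  rcases Nat.lt_or_ge ((j : ℕ) + k) n with h | h
  · rw [phiQ_lo Q _ j h, stdE_eval]
    simp only [Fin.val_mk]
    rw [if_neg (by omega), if_neg (by omega), if_neg (by omega)]
  · have hm : (j : ℕ) + k - n < n := by omega
    rw [phiQ_hi Q _ j h hm, stdE_eval, Tsum_stdE hs1 hsk hkn]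
    simp only [Fin.val_mk]
    split_ifs <;> first | omega | ring1

theorem phiQ_Sq {n k : ℕ} (Q : Fin n → ℤ) (hkn : k ≤ n) :
    ∀ s, s ≤ k → ∀ j : Fin n, phiQ n k Q (Sq n Q s) j =
      if n ≤ (j : ℕ) + k ∧ (j : ℕ) + k - n + 1 ≤ s then qval n Q ((j : ℕ) + k - n + 1)
      else 0 := by
  intro s
  induction s with
  | zero =>
      intro _ j
      rw [Sq_zero, phiQ_zero, if_neg (by omega)]
      rfl
  | succ s ih =>
      intro hs j
      have hs' : s ≤ k := by omega
      have hcast : ((s : ℤ) + 1) = ((s + 1 : ℕ) : ℤ) := by push_cast; ring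
      have ha : phiQ n k Q (aQ n Q (s + 1)) j =
          if n ≤ (j : ℕ) + k ∧ (j : ℕ) + k - n + 1 = s + 1 then 1 else 0 := by
        rw [aQ_succ, hcast, phiQ_sub, Pi.sub_apply,
          phiQ_stdE Q (by omega) (by omega) hkn j, ih hs' j]
        split_ifs <;> first | omega | ring1
      rw [Sq_succ,
        show phiQ n k Q (Sq n Q s + qval n Q (s + 1) • aQ n Q (s + 1)) j
            = phiQ n k Q (Sq n Q s) j + qval n Q (s + 1) * phiQ n k Q (aQ n Q (s + 1)) j by
          rw [phiQ_add, phiQ_smul]; simp,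
        ih hs' j, ha]
      split_ifs with h1 h2 <;>
        first
          | omega
          | ring1
          | (rw [show (j : ℕ) + k - n + 1 = s + 1 from by omega]; ring)
          | (rw [show (j : ℕ) + k - n = s from by omega]; try ring1)

theorem phiQ_aQ {n k : ℕ} (Q : Fin n → ℤ) {s : ℕ} (hs1 : 1 ≤ s) (hsk : s ≤ k) (hkn : k ≤ n)
    (j : Fin n) :
    phiQ n k Q (aQ n Q s) j =
      if n ≤ (j : ℕ) + k ∧ (j : ℕ) + k - n + 1 = s then 1 else 0 := by
  obtain ⟨t, rfl⟩ : ∃ t, s = t + 1 := ⟨s - 1, by omega⟩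
  have hcast : ((t : ℤ) + 1) = ((t + 1 : ℕ) : ℤ) := by push_cast; ring
  rw [aQ_succ, hcast, phiQ_sub, Pi.sub_apply, phiQ_stdE Q (by omega) hsk hkn j,
    phiQ_Sq Q hkn t (by omega) j]
  split_ifs <;> first | omega | ring1
theorem zero_mem_VQ {n : ℕ} {Q : Fin n → ℤ} (hQ : ∀ i, 0 ≤ Q i) :
    ∀ s, (0 : Fin n → ℤ) ∈ VQ n Q s := by
  intro s
  induction s with
  | zero => rfl
  | succ s ih => exact ⟨0, le_refl 0, qval_nonneg hQ _, 0, ih, by simp⟩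

theorem Sq_mem_VQ {n : ℕ} {Q : Fin n → ℤ} (hQ : ∀ i, 0 ≤ Q i) :
    ∀ s, Sq n Q s ∈ VQ n Q s := by
  intro s
  induction s with
  | zero => rfl
  | succ s ih =>
      exact ⟨qval n Q (s + 1), qval_nonneg hQ _, le_refl _, Sq n Q s, ih,
        by rw [Sq_succ]; abel⟩

theorem Sq_sub_mem_VQ {n : ℕ} {Q : Fin n → ℤ} :
    ∀ s, ∀ v ∈ VQ n Q s, Sq n Q s - v ∈ VQ n Q s := by
  intro s
  induction s with
  | zero =>
      intro v hv
      rw [show VQ n Q 0 = {0} from rfl, Set.mem_singleton_iff] at hv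
      subst hv
      simp only [sub_zero]
      rfl
  | succ s ih =>
      rintro v ⟨c, hc0, hcq, w, hw, rfl⟩
      refine ⟨qval n Q (s + 1) - c, by omega, by omega, Sq n Q s - w, ih w hw, ?_⟩
      rw [Sq_succ, sub_smul]
      abel

theorem partB {n : ℕ} (Q : Fin n → ℤ) {k : ℕ} (hk1 : 1 ≤ k) :
    VQ n Q (k - 1) = (fun v => (stdE n (k : ℤ) - aQ n Q k) - v) '' VQ n Q (k - 1) := by
  obtain ⟨t, rfl⟩ : ∃ t, k = t + 1 := ⟨k - 1, by omega⟩
  have h1 : ((t + 1 : ℕ) : ℤ) = (t : ℤ) + 1 := by push_cast; ring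
  have h2 : stdE n ((t + 1 : ℕ) : ℤ) - aQ n Q (t + 1) = Sq n Q t := by
    rw [h1, aQ_succ, sub_sub_cancel]
  simp only [Nat.add_sub_cancel, h2]
  ext x
  constructor
  · intro hx
    exact ⟨Sq n Q t - x, Sq_sub_mem_VQ t x hx, by simp⟩
  · rintro ⟨v, hv, rfl⟩
    exact Sq_sub_mem_VQ t v hv
theorem Tsum_eq_zero {n k : ℕ} {X : Fin n → ℤ} {m : ℕ}
    (h : ∀ i : Fin n, m ≤ (i : ℕ) → X i = 0) : Tsum n k X m = 0 :=
  Finset.sum_eq_zero fun i _ => by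
    split
    · exact h i (by omega)
    · rfl

theorem phiQ_inj {n k : ℕ} {Q X : Fin n → ℤ} (hkn : k ≤ n)
    (hz : ∀ j : Fin n, phiQ n k Q X j = 0) : X = 0 := by
  have hhi : ∀ i : Fin n, k ≤ (i : ℕ) → X i = 0 := by
    intro i hi
    have hjn : (i : ℕ) - k < n := by omega
    have := hz ⟨(i : ℕ) - k, hjn⟩
    rw [phiQ_lo Q X _ (by simp only [Fin.val_mk]; omega)] at this
    convert this using 2
    exact Fin.ext (by simp only [Fin.val_mk]; omega)
  have key : ∀ t : ℕ, ∀ i : Fin n, k - t ≤ (i : ℕ) → X i = 0 := by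
    intro t
    induction t with
    | zero => intro i hi; exact hhi i (by omega)
    | succ t ih =>
        intro i hi
        rcases Nat.lt_or_ge ((i : ℕ)) (k - t) with h1 | h1
        · -- (i : ℕ) = k - t - 1, in particular i < k ≤ n
          have hik : (i : ℕ) < k := by omega
          have hjn : n - k + (i : ℕ) < n := by omega
          have hj := hz ⟨n - k + (i : ℕ), hjn⟩
          rw [phiQ_hi Q X _ (by simp only [Fin.val_mk]; omega)
            (by simp only [Fin.val_mk]; omega)] at hj
          simp only [Fin.val_mk] at hj
          have hT : Tsum n k X (n - k + (i : ℕ) + k - n + 1) = 0 :=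
            Tsum_eq_zero fun i' hi' => ih i' (by omega)
          rw [hT, mul_zero, add_zero] at hj
          rw [← hj]
          congr 1
          exact Fin.ext (by simp only [Fin.val_mk]; omega)
        · exact ih i h1
  funext i
  exact key k i (by omega)

/-- The box set (first `n-k` coordinates of `φX` vanish up to level `s`). -/
def Box (n k : ℕ) (Q : Fin n → ℤ) (s : ℕ) : Set (Fin n → ℤ) :=
  {X | ∀ j : Fin n,
    (((j : ℕ) + k < n ∨ n + s ≤ (j : ℕ) + k) → phiQ n k Q X j = 0) ∧
    (n ≤ (j : ℕ) + k ∧ (j : ℕ) + k < n + s →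
      0 ≤ phiQ n k Q X j ∧ phiQ n k Q X j ≤ qval n Q ((j : ℕ) + k - n + 1))}

theorem VQ_eq_Box {n k : ℕ} {Q : Fin n → ℤ} (hkn : k ≤ n) :
    ∀ s, s ≤ k → VQ n Q s = Box n k Q s := by
  intro s
  induction s with
  | zero =>
      intro _
      ext X
      constructor
      · intro hX
        rw [show VQ n Q 0 = {0} from rfl, Set.mem_singleton_iff] at hX
        subst hX
        intro j
        constructor
        · intro _; rw [phiQ_zero]; rfl
        · intro h; omega
      · intro hX
        have : X = 0 := phiQ_inj hkn fun j => (hX j).1 (by omega)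
        rw [show VQ n Q 0 = {0} from rfl, Set.mem_singleton_iff]
        exact this
  | succ s ih =>
      intro hs
      have ihs := ih (by omega)
      ext X
      constructor
      · rintro ⟨c, hc0, hcq, v, hv, rfl⟩
        rw [ihs] at hv
        intro j
        have hphi : phiQ n k Q (c • aQ n Q (s + 1) + v) j
            = c * phiQ n k Q (aQ n Q (s + 1)) j + phiQ n k Q v j := by
          rw [phiQ_add, phiQ_smul]; simp
        rw [hphi, phiQ_aQ Q (by omega) hs hkn j]
        rcases Nat.lt_or_ge ((j : ℕ) + k) n with h | h
        · refine ⟨fun _ => ?_, fun hc => by omega⟩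
          rw [if_neg (by omega), mul_zero, zero_add]
          exact ((hv j).1 (Or.inl h))
        · rcases Nat.lt_or_ge ((j : ℕ) + k) (n + s) with h2 | h2
          · -- m + 1 ≤ s
            rw [if_neg (by omega), mul_zero, zero_add]
            exact ⟨fun hc => by omega, fun _ => (hv j).2 ⟨h, h2⟩⟩
          · rcases Nat.lt_or_ge ((j : ℕ) + k) (n + s + 1) with h3 | h3
            · -- m = s
              rw [if_pos ⟨h, by omega⟩, mul_one, (hv j).1 (Or.inr h2), add_zero]
              refine ⟨fun hc => by omega, fun _ => ⟨hc0, ?_⟩⟩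
              rw [show (j : ℕ) + k - n + 1 = s + 1 from by omega]
              exact hcq
            · rw [if_neg (by omega), mul_zero, zero_add, (hv j).1 (Or.inr h2)]
              exact ⟨fun _ => rfl, fun hc => by omega⟩
      · intro hX
        have hsn : n - k + s < n := by omega
        set j₀ : Fin n := ⟨n - k + s, hsn⟩ with hj₀
        have hj₀k : (j₀ : ℕ) + k = n + s := by simp only [hj₀, Fin.val_mk]; omega
        set c := phiQ n k Q X j₀ with hc
        have hcb := (hX j₀).2 (by omega)
        rw [show (j₀ : ℕ) + k - n + 1 = s + 1 from by omega] at hcb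
        refine ⟨c, hcb.1, hcb.2, X - c • aQ n Q (s + 1), ?_, by abel⟩
        rw [ihs]
        intro j
        have hphi : phiQ n k Q (X - c • aQ n Q (s + 1)) j
            = phiQ n k Q X j - c * phiQ n k Q (aQ n Q (s + 1)) j := by
          rw [phiQ_sub, phiQ_smul]; simp
        rw [hphi, phiQ_aQ Q (by omega) hs hkn j]
        constructor
        · rintro (h | h)
          · rw [if_neg (by omega), mul_zero, sub_zero]
            exact (hX j).1 (Or.inl h)
          · rcases Nat.lt_or_ge ((j : ℕ) + k) (n + s + 1) with h3 | h3
            · -- j = j₀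
              have : j = j₀ := Fin.ext (by simp only [hj₀, Fin.val_mk]; omega)
              subst this
              rw [if_pos ⟨by omega, by omega⟩, mul_one, ← hc, sub_self]
            · rw [if_neg (by omega), mul_zero, sub_zero]
              exact (hX j).1 (Or.inr h3)
        · rintro ⟨h1, h2⟩
          rw [if_neg (by omega), mul_zero, sub_zero]
          exact (hX j).2 ⟨h1, by omega⟩
theorem stdE_nonneg (n : ℕ) (z : ℤ) (i : Fin n) : 0 ≤ stdE n z i := by
  unfold stdE; split <;> norm_num

theorem reach_zero_VQ {n : ℕ} {Q : Fin n → ℤ} (hQ : ∀ i, 0 ≤ Q i) :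
    ∀ s, ∀ X ∈ VQ n Q s, ReachIn (VQ n Q s) X 0 := by
  intro s
  induction s with
  | zero =>
      intro X hX
      rw [show VQ n Q 0 = {0} from rfl, Set.mem_singleton_iff] at hX
      subst hX
      exact Relation.ReflTransGen.refl
  | succ s ih =>
      have subslab : ∀ c : ℤ, 0 ≤ c → c ≤ qval n Q (s + 1) →
          ((c • aQ n Q (s + 1) + ·) '' VQ n Q s) ⊆ VQ n Q (s + 1) := by
        rintro c h0 hq _ ⟨w, hw, rfl⟩
        exact ⟨c, h0, hq, w, hw, rfl⟩
      have slabreach : ∀ c : ℤ, 0 ≤ c → c ≤ qval n Q (s + 1) → ∀ v ∈ VQ n Q s,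
          ReachIn (VQ n Q (s + 1)) (c • aQ n Q (s + 1) + v) (c • aQ n Q (s + 1)) := by
        intro c h0 hq v hv
        have h1 := reachIn_translate (c • aQ n Q (s + 1)) (ih v hv)
        have h2 := reachIn_mono (subslab c h0 hq) h1
        simpa using h2
      have main : ∀ c : ℤ, 0 ≤ c → c ≤ qval n Q (s + 1) →
          ReachIn (VQ n Q (s + 1)) (c • aQ n Q (s + 1)) 0 := by
        refine fun c h0 => Int.le_induction
          (motive := fun z _ => z ≤ qval n Q (s + 1) → ReachIn (VQ n Q (s + 1)) (z • aQ n Q (s + 1)) 0)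
          (fun _ => by rw [zero_smul]; exact Relation.ReflTransGen.refl) ?_ c h0
        intro c hc ihc hcq
        have hcq' : c ≤ qval n Q (s + 1) := by omega
        have r1 : ReachIn (VQ n Q (s + 1)) ((c + 1) • aQ n Q (s + 1))
            ((c + 1) • aQ n Q (s + 1) + Sq n Q s) :=
          reachIn_symm (slabreach (c + 1) (by omega) hcq (Sq n Q s) (Sq_mem_VQ hQ s))
        have hst : (c + 1) • aQ n Q (s + 1) + Sq n Q s
            = c • aQ n Q (s + 1) + stdE n ((s : ℤ) + 1) := by
          rw [add_smul, one_smul, aQ_succ]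
          abel
        have r2 : StepIn (VQ n Q (s + 1)) ((c + 1) • aQ n Q (s + 1) + Sq n Q s)
            (c • aQ n Q (s + 1)) := by
          refine ⟨⟨c + 1, by omega, hcq, Sq n Q s, Sq_mem_VQ hQ s, rfl⟩,
            ⟨c, by omega, by omega, 0, zero_mem_VQ hQ s, by rw [add_zero]⟩, Or.inr ?_⟩
          intro i
          rw [hst]
          exact le_add_of_nonneg_right (stdE_nonneg n _ i)
        exact (r1.tail r2).trans (ihc hcq')
      rintro X ⟨c, h0, hq, v, hv, rfl⟩
      exact (slabreach c h0 hq v hv).trans (main c h0 hq)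

theorem isConnSet_VQ {n : ℕ} {Q : Fin n → ℤ} (hQ : ∀ i, 0 ≤ Q i) (s : ℕ) :
    IsConnSet (VQ n Q s) := fun x hx y hy =>
  (reach_zero_VQ hQ s x hx).trans (reachIn_symm (reach_zero_VQ hQ s y hy))
/-- The lex-interval set `{X : 0 ≤lex φ(X) ≤lex (0,…,0,q_1,…,q_k)}`. -/
def Lset (n k : ℕ) (Q : Fin n → ℤ) : Set (Fin n → ℤ) :=
  {X | lexLe 0 (phiQ n k Q X) ∧
    lexLe (phiQ n k Q X)
      (fun j => if (j : ℕ) + k < n then 0 else qval n Q ((j : ℕ) + k - n + 1))}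

theorem lex_first_zero {n k : ℕ} {Q b : Fin n → ℤ} (hb : b ∈ Lset n k Q) :
    ∀ j : Fin n, (j : ℕ) + k < n → phiQ n k Q b j = 0 := by
  obtain ⟨h0, hc⟩ := hb
  set z := phiQ n k Q b with hz
  set c : Fin n → ℤ := fun j => if (j : ℕ) + k < n then 0 else qval n Q ((j : ℕ) + k - n + 1)
    with hcdef
  suffices H : ∀ m : ℕ, ∀ hm : m < n, m + k < n → z ⟨m, hm⟩ = 0 by
    intro j hj
    exact H (j : ℕ) j.isLt hj
  intro m
  induction m using Nat.strong_induction_on with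
  | _ m ih =>
    intro hm hmk
    by_contra hne
    have ih' : ∀ i : Fin n, (i : ℕ) < m → z i = 0 := fun i hi =>
      ih (i : ℕ) hi i.isLt (by omega)
    have hpos : 0 < z ⟨m, hm⟩ := by
      rcases h0 with h | ⟨i, hlt, hi⟩
      · exact absurd (h ▸ rfl) hne
      · simp only [Pi.zero_apply] at hi
        rcases lt_trichotomy ((i : ℕ)) m with h' | h' | h'
        · rw [ih' i h'] at hi
          exact absurd hi (lt_irrefl 0)
        · have : i = ⟨m, hm⟩ := Fin.ext h'
          rw [← this]
          exact hi
        · have := hlt ⟨m, hm⟩ (by simpa [Fin.lt_def] using h')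
          exact absurd this.symm hne
    have hcm : c ⟨m, hm⟩ = 0 := by simp only [hcdef, Fin.val_mk]; rw [if_pos hmk]
    rcases hc with h | ⟨i, hlt, hi⟩
    · have : z ⟨m, hm⟩ = c ⟨m, hm⟩ := by rw [h]
      rw [this, hcm] at hpos
      exact lt_irrefl 0 hpos
    · rcases lt_trichotomy ((i : ℕ)) m with h' | h' | h'
      · have hz0 : z i = 0 := ih' i h'
        have hc0 : c i = 0 := by simp only [hcdef]; rw [if_pos (by omega)]
        rw [hz0, hc0] at hi
        exact lt_irrefl 0 hi
      · have : i = ⟨m, hm⟩ := Fin.ext h'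
        rw [this, hcm] at hi
        omega
      · have := hlt ⟨m, hm⟩ (by simpa [Fin.lt_def] using h')
        exact hne (this.trans hcm)

theorem phid_tail {n k : ℕ} (Q d : Fin n → ℤ) (hkn : k ≤ n) (j : Fin n)
    (h : n ≤ (j : ℕ) + k) :
    phiQ n k Q d j =
      (Tsum n k d ((j : ℕ) + k - n) - Tsum n k d ((j : ℕ) + k - n + 1)) +
        qval n Q ((j : ℕ) + k - n + 1) * Tsum n k d ((j : ℕ) + k - n + 1) := by
  have hm : (j : ℕ) + k - n < n := by omega
  rw [phiQ_hi Q d j h hm, Tsum_succ d (show (j : ℕ) + k - n < k by omega) hm]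
  ring

theorem Tsum_pos {n k : ℕ} {Q d : Fin n → ℤ} (hQ : ∀ i, 0 ≤ Q i) (hd : ∀ i, 0 ≤ d i)
    {m : ℕ} (hφ : 1 ≤ (Tsum n k d m - Tsum n k d (m + 1)) +
      qval n Q (m + 1) * Tsum n k d (m + 1)) :
    1 ≤ Tsum n k d m := by
  by_contra h
  push_neg at h
  have h0 : Tsum n k d m = 0 := le_antisymm (by omega) (Tsum_nonneg hd m)
  have h1 : Tsum n k d (m + 1) = 0 :=
    le_antisymm (h0 ▸ Tsum_anti hd (Nat.le_succ m)) (Tsum_nonneg hd (m + 1))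
  rw [h0, h1] at hφ
  simp at hφ

theorem phid_lb {n k : ℕ} {Q d : Fin n → ℤ} (hQ : ∀ i, 0 ≤ Q i) (hd : ∀ i, 0 ≤ d i)
    {mi mj : ℕ} (h : mi + 1 ≤ mj) (hT : 1 ≤ Tsum n k d mj) :
    qval n Q (mi + 1) ≤ (Tsum n k d mi - Tsum n k d (mi + 1)) +
      qval n Q (mi + 1) * Tsum n k d (mi + 1) := by
  have h1 : 1 ≤ Tsum n k d (mi + 1) := le_trans hT (Tsum_anti hd h)
  have h2 : Tsum n k d (mi + 1) ≤ Tsum n k d mi := Tsum_anti hd (Nat.le_succ mi)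
  have h3 := mul_le_mul_of_nonneg_left h1 (qval_nonneg hQ (mi + 1))
  rw [mul_one] at h3
  linarith

theorem phid_nonneg {n k : ℕ} {Q d : Fin n → ℤ} (hQ : ∀ i, 0 ≤ Q i) (hd : ∀ i, 0 ≤ d i)
    (hkn : k ≤ n) (j : Fin n) (h : n ≤ (j : ℕ) + k) : 0 ≤ phiQ n k Q d j := by
  rw [phid_tail Q d hkn j h]
  have h1 := Tsum_anti (n := n) (k := k) hd (Nat.le_succ ((j : ℕ) + k - n))
  have h2 := Tsum_nonneg (n := n) (k := k) hd ((j : ℕ) + k - n + 1)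
  have h3 := qval_nonneg hQ ((j : ℕ) + k - n + 1)
  nlinarith
theorem step_closure {n k : ℕ} {Q : Fin n → ℤ} (hQ : ∀ i, 0 ≤ Q i) (hkn : k ≤ n)
    {a b : Fin n → ℤ} (ha : a ∈ VQ n Q k) (hb : b ∈ Lset n k Q)
    (hcomp : a ≤ b ∨ b ≤ a) : b ∈ VQ n Q k := by
  rw [VQ_eq_Box hkn k le_rfl] at ha ⊢
  have hbz := lex_first_zero hb
  have haz : ∀ j : Fin n, (j : ℕ) + k < n → phiQ n k Q a j = 0 := fun j hj =>
    (ha j).1 (Or.inl hj)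
  have hab : ∀ j : Fin n, n ≤ (j : ℕ) + k →
      0 ≤ phiQ n k Q a j ∧ phiQ n k Q a j ≤ qval n Q ((j : ℕ) + k - n + 1) := fun j hj =>
    (ha j).2 ⟨hj, by have := j.isLt; omega⟩
  have hcj : ∀ jj : Fin n,
      (fun j : Fin n => if (j : ℕ) + k < n then (0 : ℤ) else qval n Q ((j : ℕ) + k - n + 1)) jj
        = if (jj : ℕ) + k < n then (0 : ℤ) else qval n Q ((jj : ℕ) + k - n + 1) := fun _ => rfl
  intro j
  refine ⟨?_, ?_⟩
  · rintro (hj | hj)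
    · exact hbz j hj
    · exact absurd j.isLt (by omega)
  · rintro ⟨hjt, -⟩
    rcases hcomp with hle | hle
    · -- a ≤ b
      set d : Fin n → ℤ := b - a with hddef
      have hd : ∀ i, 0 ≤ d i := fun i => sub_nonneg.2 (hle i)
      have hφd : ∀ jj : Fin n, phiQ n k Q d jj = phiQ n k Q b jj - phiQ n k Q a jj :=
        fun jj => by rw [hddef, phiQ_sub, Pi.sub_apply]
      have hlow : 0 ≤ phiQ n k Q b j := by
        have h1 := phid_nonneg hQ hd hkn j hjt
        have h2 := (hab j hjt).1
        have h3 := hφd j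
        linarith
      refine ⟨hlow, ?_⟩
      rcases hb.2 with hzc | ⟨i, hlt, hi⟩
      · have := congrFun hzc j
        rw [if_neg (show ¬((j : ℕ) + k < n) by omega)] at this
        exact le_of_eq this
      · rw [hcj i] at hi
        have hit : n ≤ (i : ℕ) + k := by
          by_contra hcon
          push_neg at hcon
          rw [hbz i hcon, if_pos hcon] at hi
          exact lt_irrefl 0 hi
        rw [if_neg (by omega)] at hi
        rcases lt_trichotomy ((j : ℕ)) ((i : ℕ)) with h' | h' | h'
        · have := hlt j (Fin.lt_def.mpr h')
          rw [this, hcj j, if_neg (by omega)]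
        · have : i = j := Fin.ext h'.symm
          subst this
          exact le_of_lt hi
        · by_contra hq
          push_neg at hq
          have hyj := (hab j hjt).2
          have hdj : 1 ≤ phiQ n k Q d j := by
            have := hφd j
            linarith
          have hT : 1 ≤ Tsum n k d ((j : ℕ) + k - n) :=
            Tsum_pos hQ hd (by rw [← phid_tail Q d hkn j hjt]; exact hdj)
          have hlb : qval n Q ((i : ℕ) + k - n + 1) ≤ phiQ n k Q d i := by
            rw [phid_tail Q d hkn i hit]
            exact phid_lb hQ hd (by omega) hT
          have hyi := (hab i hit).1
          have h5 := hφd i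
          linarith
    · -- b ≤ a
      set d : Fin n → ℤ := a - b with hddef
      have hd : ∀ i, 0 ≤ d i := fun i => sub_nonneg.2 (hle i)
      have hφd : ∀ jj : Fin n, phiQ n k Q d jj = phiQ n k Q a jj - phiQ n k Q b jj :=
        fun jj => by rw [hddef, phiQ_sub, Pi.sub_apply]
      have hup : phiQ n k Q b j ≤ qval n Q ((j : ℕ) + k - n + 1) := by
        have h1 := phid_nonneg hQ hd hkn j hjt
        have h2 := (hab j hjt).2
        have h3 := hφd j
        linarith
      refine ⟨?_, hup⟩
      rcases hb.1 with hzc | ⟨i, hlt, hi⟩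
      · exact le_of_eq (congrFun hzc j)
      · simp only [Pi.zero_apply] at hi
        have hit : n ≤ (i : ℕ) + k := by
          by_contra hcon
          push_neg at hcon
          rw [hbz i hcon] at hi
          exact lt_irrefl 0 hi
        rcases lt_trichotomy ((j : ℕ)) ((i : ℕ)) with h' | h' | h'
        · have := hlt j (Fin.lt_def.mpr h')
          exact le_of_eq this
        · have : i = j := Fin.ext h'.symm
          subst this
          exact le_of_lt hi
        · by_contra hq
          push_neg at hq
          have hdj : 1 ≤ phiQ n k Q d j := by
            have h4 := hφd j
            have h5 := (hab j hjt).1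
            linarith
          have hT : 1 ≤ Tsum n k d ((j : ℕ) + k - n) :=
            Tsum_pos hQ hd (by rw [← phid_tail Q d hkn j hjt]; exact hdj)
          have hlb : qval n Q ((i : ℕ) + k - n + 1) ≤ phiQ n k Q d i := by
            rw [phid_tail Q d hkn i hit]
            exact phid_lb hQ hd (by omega) hT
          have hyi := (hab i hit).2
          have h5 := hφd i
          linarith

theorem VQ_subset_Lset {n k : ℕ} {Q : Fin n → ℤ} (hQ : ∀ i, 0 ≤ Q i) (hkn : k ≤ n) :
    VQ n Q k ⊆ Lset n k Q := by
  intro X hX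
  rw [VQ_eq_Box hkn k le_rfl] at hX
  constructor
  · refine lexLe_of_le fun j => ?_
    simp only [Pi.zero_apply]
    rcases Nat.lt_or_ge ((j : ℕ) + k) n with h | h
    · rw [(hX j).1 (Or.inl h)]
    · exact ((hX j).2 ⟨h, by have := j.isLt; omega⟩).1
  · refine lexLe_of_le fun j => ?_
    rcases Nat.lt_or_ge ((j : ℕ) + k) n with h | h
    · rw [(hX j).1 (Or.inl h)]
      simp [h]
    · have := ((hX j).2 ⟨h, by have := j.isLt; omega⟩).2
      simpa [if_neg (by omega : ¬((j : ℕ) + k < n))] using this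

theorem partC2 {n k : ℕ} {Q : Fin n → ℤ} (hQ : ∀ i, 0 ≤ Q i) (hk1 : 1 ≤ k) (hkn : k ≤ n) :
    VQ n Q k = connComp (Lset n k Q) 0 := by
  ext x
  constructor
  · intro hx
    exact ⟨VQ_subset_Lset hQ hkn hx,
      reachIn_mono (VQ_subset_Lset hQ hkn) (reachIn_symm (reach_zero_VQ hQ k x hx))⟩
  · rintro ⟨hxL, hreach⟩
    clear hxL
    induction hreach with
    | refl => exact zero_mem_VQ hQ k
    | tail hr hstep ih => exact step_closure hQ hkn ih hstep.2.1 hstep.2.2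
/-- (a) `V_k^Q = (φ_k^Q)⁻¹(W_k)`; (b) `V_{k−1}^Q = (e_k − a_k^Q) − V_{k−1}^Q`;
(c) `V_k^Q` is connected and equals the connected component of `0` in
`{X : 0 ≤lex φ_k^Q(X) ≤lex (0,…,0,q_1,…,q_k)}`. -/
theorem statement8 (n : ℕ) (hn : 1 ≤ n) (Q : Fin n → ℤ) (hQ : ∀ i, 0 ≤ Q i)
    (k : ℕ) (hk1 : 1 ≤ k) (hkn : k ≤ n) :
    VQ n Q k = {X | ∀ j : Fin n,
        ((j : ℕ) + k < n → phiQ n k Q X j = 0) ∧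
        (n ≤ (j : ℕ) + k → 0 ≤ phiQ n k Q X j ∧
          phiQ n k Q X j ≤ qval n Q ((j : ℕ) + k - n + 1))} ∧
    VQ n Q (k - 1) = (fun v => (stdE n (k : ℤ) - aQ n Q k) - v) '' VQ n Q (k - 1) ∧
    IsConnSet (VQ n Q k) ∧
    VQ n Q k = connComp {X | lexLe 0 (phiQ n k Q X) ∧
      lexLe (phiQ n k Q X)
        (fun j => if (j : ℕ) + k < n then 0 else qval n Q ((j : ℕ) + k - n + 1))} 0 := by
  refine ⟨?_, partB Q hk1, isConnSet_VQ hQ k, ?_⟩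
  · rw [VQ_eq_Box hkn k le_rfl]
    ext X
    simp only [Box, Set.mem_setOf_eq]
    constructor
    · intro h j
      exact ⟨fun hc => (h j).1 (Or.inl hc), fun hc => (h j).2 ⟨hc, by have := j.isLt; omega⟩⟩
    · intro h j
      refine ⟨?_, fun hc => (h j).2 hc.1⟩
      rintro (hc | hc)
      · exact (h j).1 hc
      · exact absurd j.isLt (by omega)
  · exact partC2 hQ hk1 hkn
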